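/- arXiv:1409.7363 — 5 statements merged into one kernel-verified Lean document; each statement's English description precedes it below -/
import Mathlib

section
/- For X = ℝ^ℕ with the product topology and pointwise multiplication, the multiplication map σ(x,y) = xy is not n-bounded: there exist no neighborhoods U, V of zero in X such that σ(U,V) is bounded in X. -/
abbrev RN : Type := ℕ → ℝ

/-- `B` is bounded in the topological module sense (`RN` over itself). -/
def RNBdd (B : Set RN) : Prop :=
  ∀ W ∈ nhds (0 : RN), ∃ V ∈ nhds (0 : RN), ∀ v ∈ V, ∀ b ∈ B, v * b ∈ W

/-- Pointwise multiplication on ℝ^ℕ is not n-bounded. -/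
theorem stmt1 :
    ¬ ∃ U ∈ nhds (0 : RN), ∃ V ∈ nhds (0 : RN),
      RNBdd (Set.image2 (fun x y : RN => x * y) U V) := by
  rintro ⟨U, hU, V, hV, hB⟩
  rw [nhds_pi, Filter.mem_pi] at hU hV
  obtain ⟨IU, hIUf, tU, htU, hIU⟩ := hU
  obtain ⟨IV, hIVf, tV, htV, hIV⟩ := hV
  obtain ⟨n, hn⟩ := (hIUf.union hIVf).infinite_compl.nonempty
  set δ : ℝ → RN := fun c i => if i = n then c else 0 with hδ
  have hδU : ∀ c, δ c ∈ U := by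
    intro c
    apply hIU
    intro i hi
    have hne : i ≠ n := by rintro rfl; exact hn (Or.inl hi)
    simpa [hδ, hne] using mem_of_mem_nhds (htU i)
  have hδV : ∀ c, δ c ∈ V := by
    intro c
    apply hIV
    intro i hi
    have hne : i ≠ n := by rintro rfl; exact hn (Or.inr hi)
    simpa [hδ, hne] using mem_of_mem_nhds (htV i)
  have hδB : ∀ r, δ r ∈ Set.image2 (fun x y : RN => x * y) U V := by
    intro r
    refine ⟨δ r, hδU r, δ 1, hδV 1, ?_⟩
    funext i
    by_cases h : i = n <;> simp [hδ, h]
  have hW : ((fun f : RN => f n) ⁻¹' Set.Ioo (-1) 1) ∈ nhds (0 : RN) := by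
    apply (continuous_apply n).continuousAt.preimage_mem_nhds
    have : (0 : RN) n = 0 := rfl
    rw [this]
    exact Ioo_mem_nhds (by norm_num) (by norm_num)
  obtain ⟨V', hV', hV'B⟩ := hB _ hW
  rw [nhds_pi, Filter.mem_pi] at hV'
  obtain ⟨I, hIf, t, ht, hI⟩ := hV'
  obtain ⟨ε, hε0, hεt⟩ : ∃ ε : ℝ, ε ≠ 0 ∧ δ ε ∈ Set.pi I t := by
    by_cases hnI : n ∈ I
    · obtain ⟨r, hr, hrsub⟩ := Metric.mem_nhds_iff.mp (ht n)
      refine ⟨r / 2, by positivity, ?_⟩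
      intro i hi
      by_cases h : i = n
      · subst h
        simp only [hδ, if_pos rfl]
        apply hrsub
        simp only [Metric.mem_ball, Real.dist_eq, Pi.zero_apply, sub_zero]
        rw [abs_of_pos (by positivity)]
        linarith
      · simpa [hδ, h] using mem_of_mem_nhds (ht i)
    · refine ⟨1, one_ne_zero, ?_⟩
      intro i hi
      have hne : i ≠ n := fun h => hnI (h ▸ hi)
      simpa [hδ, hne] using mem_of_mem_nhds (ht i)
  have hcon := hV'B (δ ε) (hI hεt) (δ (2 / ε)) (hδB _)
  have : (δ ε * δ (2 / ε)) n = 2 := by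
    simp [hδ, Pi.mul_apply]
    field_simp
  simp only [Set.mem_preimage, Set.mem_Ioo, this] at hcon
  linarith [hcon.2]
end

section
/- Let X = ℓ^∞ with the uniform norm topology and Y = ℓ^∞ with the topology induced from the product topology of ℝ^ℕ (coordinate-wise topology), both with pointwise multiplication. The multiplication map σ: X × Y → Y, σ(x,y) = xy, is not n-bounded: for every zero neighborhood U ⊆ X and every zero neighborhood V ⊆ Y, σ(U,V) is not bounded in Y. -/
open scoped ENNReal

/-- `ℓ^∞`: the space of bounded real sequences with the sup norm. -/
abbrev Linf : Type := lp (fun _ : ℕ => ℝ) ∞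

/-- Module-sense boundedness in `ℓ^∞` with the norm topology, over itself. -/
def LinfBdd (B : Set Linf) : Prop :=
  ∀ W ∈ nhds (0 : Linf), ∃ V ∈ nhds (0 : Linf), ∀ v ∈ V, ∀ b ∈ B, v * b ∈ W

/-- `W` is a zero neighborhood of `ℓ^∞` in the coordinate-wise (product) topology. -/
def CoordNhd (W : Set Linf) : Prop :=
  ∃ Wp ∈ nhds (0 : ℕ → ℝ), {y : Linf | (y : ℕ → ℝ) ∈ Wp} ⊆ W

/-- Module-sense boundedness in `ℓ^∞` with the coordinate-wise topology, over itself. -/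
def CoordBdd (B : Set Linf) : Prop :=
  ∀ W, CoordNhd W → ∃ V, CoordNhd V ∧ ∀ v ∈ V, ∀ b ∈ B, v * b ∈ W

lemma single_coe (n j : ℕ) :
    ((lp.single ∞ n (1:ℝ) : Linf) : ℕ → ℝ) j = if j = n then 1 else 0 := by
  by_cases h : j = n
  · subst h; simp [lp.single_apply_self]
  · simp [lp.single_apply_ne _ _ _ h, h]

lemma norm_single_le (n : ℕ) : ‖(lp.single ∞ n (1:ℝ) : Linf)‖ ≤ 1 := by
  refine lp.norm_le_of_forall_le one_pos.le fun j => ?_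
  rw [single_coe]
  split <;> simp

/-- The multiplication σ : ℓ^∞(norm) × ℓ^∞(coord) → ℓ^∞(coord) is not n-bounded. -/
theorem stmt3 :
    ∀ U ∈ nhds (0 : Linf), ∀ V : Set Linf, CoordNhd V →
      ¬ CoordBdd (Set.image2 (fun x y : Linf => x * y) U V) := by
  intro U hU V hV hB
  obtain ⟨δ, hδ, hball⟩ := Metric.mem_nhds_iff.mp hU
  obtain ⟨Wp', hWp', hVsub⟩ := hV
  rw [nhds_pi] at hWp'
  obtain ⟨I, hIfin, t, ht, hpi⟩ := Filter.mem_pi.mp hWp'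
  obtain ⟨n, hn⟩ : ∃ n : ℕ, n ∉ I := by
    rcases (hIfin.infinite_compl).nonempty with ⟨n, hn⟩
    exact ⟨n, hn⟩
  -- The target neighborhood: coordinate n smaller than 1.
  have hW : CoordNhd {y : Linf | |(y : ℕ → ℝ) n| < 1} := by
    refine ⟨(fun p : ℕ → ℝ => p n) ⁻¹' Set.Ioo (-1) 1, ?_, ?_⟩
    · exact (continuous_apply n).continuousAt.preimage_mem_nhds
        (by simpa using Ioo_mem_nhds (by norm_num) (by norm_num : (0:ℝ) < 1))
    · intro y hy
      simp only [Set.mem_preimage, Set.mem_Ioo] at hy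
      exact abs_lt.mpr hy
  obtain ⟨V'', hV'', hbd⟩ := hB _ hW
  obtain ⟨Wp'', hWp'', hsub''⟩ := hV''
  -- find small c > 0 with c • e_n ∈ V''
  have hcont : Continuous (fun s : ℝ => s • (Pi.single n (1:ℝ) : ℕ → ℝ)) :=
    continuous_id.smul continuous_const
  have hpre : (fun s : ℝ => s • (Pi.single n (1:ℝ) : ℕ → ℝ)) ⁻¹' Wp'' ∈ nhds (0:ℝ) := by
    apply hcont.continuousAt.preimage_mem_nhds
    simpa using hWp''
  obtain ⟨ε, hε, hballε⟩ := Metric.mem_nhds_iff.mp hpre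
  set c : ℝ := ε / 2 with hc
  have hc0 : 0 < c := by positivity
  have hcmem : c • (Pi.single n (1:ℝ) : ℕ → ℝ) ∈ Wp'' := by
    apply hballε
    simp only [Metric.mem_ball, dist_zero_right, Real.norm_eq_abs, hc]
    rw [abs_of_pos hc0]
    linarith
  set e : Linf := lp.single ∞ n (1:ℝ) with he
  have hecoe : ((e : Linf) : ℕ → ℝ) = Pi.single n 1 := by
    funext j
    rw [he, single_coe]
    by_cases h : j = n
    · subst h; simp
    · simp [h, Pi.single_eq_of_ne h]
  -- v ∈ V''
  set v : Linf := c • e with hv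
  have hvmem : v ∈ V'' := by
    apply hsub''
    show ((v : Linf) : ℕ → ℝ) ∈ Wp''
    rw [hv, lp.coeFn_smul, hecoe]
    exact hcmem
  -- x ∈ U
  set x : Linf := (δ/2) • e with hx
  have hxU : x ∈ U := by
    apply hball
    simp only [Metric.mem_ball, dist_zero_right, hx]
    calc ‖(δ/2) • e‖ ≤ ‖(δ/2 : ℝ)‖ * ‖e‖ := norm_smul_le _ _
      _ ≤ (δ/2) * 1 := by
          rw [Real.norm_eq_abs, abs_of_pos (by positivity)]
          exact mul_le_mul_of_nonneg_left (norm_single_le n) (by positivity)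
      _ < δ := by linarith
  -- y ∈ V
  set M : ℝ := 4 / (c * δ) with hM
  set y : Linf := M • e with hy
  have hyV : y ∈ V := by
    apply hVsub
    show ((y : Linf) : ℕ → ℝ) ∈ Wp'
    apply hpi
    intro i hi
    have hin : i ≠ n := fun h => hn (h ▸ hi)
    have : ((y : Linf) : ℕ → ℝ) i = 0 := by
      rw [hy, lp.coeFn_smul, hecoe, Pi.smul_apply, Pi.single_eq_of_ne hin]
      simp
    rw [this]
    exact mem_of_mem_nhds (ht i)
  -- b ∈ B
  have hbB : x * y ∈ Set.image2 (fun x y : Linf => x * y) U V :=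
    Set.mem_image2_of_mem hxU hyV
  have := hbd v hvmem (x * y) hbB
  -- compute coordinate n of v * (x * y)
  have hval : ((v * (x * y) : Linf) : ℕ → ℝ) n = 2 := by
    have h1 : ∀ a b : Linf, ((a * b : Linf) : ℕ → ℝ) n = a n * b n := by
      intro a b
      rw [lp.infty_coeFn_mul]; rfl
    have hen : ((e : Linf) : ℕ → ℝ) n = 1 := by rw [hecoe]; simp
    have hvn : ((v : Linf) : ℕ → ℝ) n = c := by
      rw [hv, lp.coeFn_smul, Pi.smul_apply, hen]; simp
    have hxn : ((x : Linf) : ℕ → ℝ) n = δ/2 := by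
      rw [hx, lp.coeFn_smul, Pi.smul_apply, hen]; simp
    have hyn : ((y : Linf) : ℕ → ℝ) n = M := by
      rw [hy, lp.coeFn_smul, Pi.smul_apply, hen]; simp
    rw [h1, h1, hvn, hxn, hyn, hM]
    field_simp
    ring
  rw [Set.mem_setOf_eq, hval] at this
  norm_num at this
end

section
/- Let X = ℓ^∞ with the uniform norm topology and pointwise product, and Y = ℓ^∞ with the norm topology and zero multiplication. The map σ: X × Y → X, σ(x,y) = xy, is not n/2-bounded: for every zero neighborhood U ⊆ X there is a bounded subset B ⊆ Y (every subset of Y is bounded since Y has zero multiplication) such that σ(U,B) is unbounded in X. Concretely, for the sequence aₙ = (1/ε, 2/ε, …, n/ε, 0, …) ∈ Y, the set σ(N_ε(0), {aₙ : n ∈ ℕ}) contains the unbounded set {(1,2,…,n,0,…) : n ∈ ℕ}. -/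
set_option synthInstance.maxHeartbeats 400000


open scoped ENNReal

/-- σ(x,y) = xy : ℓ^∞ × Y → ℓ^∞ (Y with zero multiplication, so every subset of Y is
bounded) is not n/2-bounded: every zero neighborhood U admits a set B with σ(U,B)
unbounded in ℓ^∞. -/
theorem stmt5 :
    ∀ U ∈ nhds (0 : Linf), ∃ B : Set Linf,
      ¬ LinfBdd (Set.image2 (fun x y : Linf => x * y) U B) := by
  intro U hU
  rw [Metric.mem_nhds_iff] at hU
  obtain ⟨ε, hε, hball⟩ := hU
  refine ⟨Set.range (fun n : ℕ => (n : ℝ) • (1 : Linf)), fun h => ?_⟩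
  obtain ⟨V, hV, hVW⟩ := h (Metric.ball 0 1) (Metric.ball_mem_nhds 0 one_pos)
  rw [Metric.mem_nhds_iff] at hV
  obtain ⟨δ, hδ, hballV⟩ := hV
  have hnorm : ∀ c : ℝ, ‖c • (1 : Linf)‖ = |c| := by
    intro c; rw [norm_smul, norm_one, mul_one, Real.norm_eq_abs]
  have hvV : ((δ/2) • (1 : Linf)) ∈ V := by
    apply hballV
    simp only [Metric.mem_ball, dist_zero_right, hnorm]
    rw [abs_of_pos (by linarith)]; linarith
  have huU : ((ε/2) • (1 : Linf)) ∈ U := by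
    apply hball
    simp only [Metric.mem_ball, dist_zero_right, hnorm]
    rw [abs_of_pos (by linarith)]; linarith
  obtain ⟨n, hn⟩ := exists_nat_gt (4 / (δ * ε))
  have hmem : ((ε/2) • (1 : Linf)) * ((n : ℝ) • (1 : Linf)) ∈
      Set.image2 (fun x y : Linf => x * y) U (Set.range (fun n : ℕ => (n : ℝ) • (1 : Linf))) :=
    Set.mem_image2_of_mem huU ⟨n, rfl⟩
  have := hVW _ hvV _ hmem
  have hcalc : ((δ/2) • (1 : Linf)) * (((ε/2) • (1 : Linf)) * ((n : ℝ) • (1 : Linf)))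
      = (δ/2 * (ε/2 * n)) • (1 : Linf) := by
    simp [smul_mul_assoc, smul_smul, mul_comm, mul_assoc, mul_left_comm]
  rw [hcalc] at this
  simp only [Metric.mem_ball, dist_zero_right, hnorm] at this
  have hδε : 0 < δ * ε := mul_pos hδ hε
  have hngt : 4 / (δ * ε) < n := hn
  have : δ/2 * (ε/2 * n) < 1 := lt_of_abs_lt this
  have h4 : 4 < δ * ε * n := by
    calc 4 = 4 / (δ * ε) * (δ * ε) := by field_simp
    _ < n * (δ * ε) := by exact mul_lt_mul_of_pos_right hngt hδε
    _ = δ * ε * n := by ring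
  nlinarith
end

section
/- The class of n-bounded bigroup homomorphisms is not uniformly complete: for X = ℝ^ℕ with product topology and pointwise product, the truncations σₙ(x,y) = (x₁y₁,…,xₙyₙ,0,…) form a Cauchy sequence in the uniform-convergence-on-zero-neighborhoods topology whose uniform limit σ(x,y) = xy is a bigroup homomorphism that is not n-bounded. -/
/-- The `n`-th truncation bigroup homomorphism. -/
def trunc (n : ℕ) (x y : RN) : RN := fun i => if i < n then x i * y i else 0

lemma mem_nhds_zero {W : Set RN} (hW : W ∈ nhds (0 : RN)) :
    ∃ I : Set ℕ, I.Finite ∧ ∃ t : ℕ → Set ℝ, (∀ i, t i ∈ nhds (0 : ℝ)) ∧ I.pi t ⊆ W := by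
  rw [nhds_pi, Filter.mem_pi] at hW
  obtain ⟨I, hI, t, ht, hsub⟩ := hW
  exact ⟨I, hI, t, fun i => ht i, hsub⟩

lemma RNBdd_mono {B B' : Set RN} (h : B ⊆ B') (hB' : RNBdd B') : RNBdd B := by
  intro W hW
  obtain ⟨V, hV, hm⟩ := hB' W hW
  exact ⟨V, hV, fun v hv b hb => hm v hv b (h hb)⟩

lemma unitBall_bdd : RNBdd {b : RN | ∀ i, |b i| ≤ 1} := by
  intro W hW
  obtain ⟨I, hI, t, ht, hsub⟩ := mem_nhds_zero hW
  choose ε hε hball using fun i => Metric.mem_nhds_iff.mp (ht i)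
  refine ⟨I.pi fun i => Metric.ball 0 (ε i), set_pi_mem_nhds hI
    (fun i _ => Metric.ball_mem_nhds 0 (hε i)), fun v hv b hb => ?_⟩
  apply hsub
  intro i hi
  apply hball i
  have hvi := hv i hi
  rw [mem_ball_zero_iff] at hvi ⊢
  calc |(v * b) i| = |v i| * |b i| := by simp [abs_mul]
    _ ≤ |v i| * 1 := by
        exact mul_le_mul_of_nonneg_left (hb i) (abs_nonneg _)
    _ < ε i := by rwa [mul_one]

/-- single sequence -/
def e (j : ℕ) (r : ℝ) : RN := fun i => if i = j then r else 0

/-- B_n(X × X) is not uniformly complete: each truncation σₙ is n-bounded, the σₙ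
converge uniformly on X × X to the pointwise product σ, but σ is not n-bounded. -/
theorem stmt13 :
    (∀ n : ℕ, ∃ U ∈ nhds (0 : RN), ∃ V ∈ nhds (0 : RN),
      RNBdd (Set.image2 (trunc n) U V)) ∧
    (∀ W ∈ nhds (0 : RN), ∃ N : ℕ, ∀ n ≥ N, ∀ x y : RN, trunc n x y - x * y ∈ W) ∧
    ¬ ∃ U ∈ nhds (0 : RN), ∃ V ∈ nhds (0 : RN),
      RNBdd (Set.image2 (fun x y : RN => x * y) U V) := by
  refine ⟨?_, ?_, ?_⟩
  · -- each truncation is n-bounded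
    intro n
    have hU : (Set.Iio n).pi (fun _ => Metric.ball (0:ℝ) 1) ∈ nhds (0 : RN) :=
      set_pi_mem_nhds (Set.finite_Iio n) (fun i _ => Metric.ball_mem_nhds 0 one_pos)
    refine ⟨_, hU, _, hU, RNBdd_mono ?_ unitBall_bdd⟩
    rintro b ⟨x, hx, y, hy, rfl⟩ i
    simp only [trunc]
    split
    · rename_i h
      have hxi := hx i h
      have hyi := hy i h
      rw [mem_ball_zero_iff, Real.norm_eq_abs] at hxi hyi
      rw [abs_mul]
      nlinarith [abs_nonneg (x i), abs_nonneg (y i)]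
    · simp
  · -- uniform convergence
    intro W hW
    obtain ⟨I, hI, t, ht, hsub⟩ := mem_nhds_zero hW
    obtain ⟨N, hN⟩ := hI.bddAbove
    refine ⟨N + 1, fun n hn x y => hsub fun i hi => ?_⟩
    have hiN : i < n := lt_of_lt_of_le (Nat.lt_succ_of_le (hN hi)) hn
    have : (trunc n x y - x * y) i = 0 := by
      simp [trunc, hiN]
    rw [this]
    exact mem_of_mem_nhds (ht i)
  · -- the product is not n-bounded
    rintro ⟨U, hU, V, hV, hBdd⟩
    obtain ⟨I, hI, t, ht, hsubU⟩ := mem_nhds_zero hU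
    obtain ⟨J, hJ, s, hs, hsubV⟩ := mem_nhds_zero hV
    obtain ⟨j, hj⟩ := (hI.union hJ).infinite_compl.nonempty
    have hjI : j ∉ I := fun h => hj (Or.inl h)
    have hjJ : j ∉ J := fun h => hj (Or.inr h)
    have hW : {w : RN | |w j| < 1} ∈ nhds (0 : RN) := by
      have ho : IsOpen {w : RN | |w j| < 1} :=
        isOpen_lt ((continuous_apply j).abs) continuous_const
      exact ho.mem_nhds (by simp)
    obtain ⟨V', hV', hmul⟩ := hBdd _ hW
    obtain ⟨K, hK, u, hu, hsubK⟩ := mem_nhds_zero hV'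
    have hc : ∃ c : ℝ, 0 < c ∧ e j c ∈ V' := by
      by_cases hjK : j ∈ K
      · obtain ⟨δ, hδ, hball⟩ := Metric.mem_nhds_iff.mp (hu j)
        refine ⟨δ / 2, by linarith, hsubK fun i hi => ?_⟩
        by_cases hij : i = j
        · subst hij
          apply hball
          rw [mem_ball_zero_iff, e, if_pos rfl, Real.norm_eq_abs, abs_of_pos (by linarith)]
          linarith
        · rw [e, if_neg hij]
          exact mem_of_mem_nhds (hu i)
      · refine ⟨1, one_pos, hsubK fun i hi => ?_⟩
        have hij : i ≠ j := fun h => hjK (by rwa [h] at hi)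
        rw [e, if_neg hij]
        exact mem_of_mem_nhds (hu i)
    obtain ⟨c, hc0, hcV'⟩ := hc
    set r := Real.sqrt (2 / c) with hr
    have hxU : e j r ∈ U := hsubU fun i hi => by
      have hij : i ≠ j := fun h => hjI (by rwa [h] at hi)
      rw [e, if_neg hij]
      exact mem_of_mem_nhds (ht i)
    have hyV : e j r ∈ V := hsubV fun i hi => by
      have hij : i ≠ j := fun h => hjJ (by rwa [h] at hi)
      rw [e, if_neg hij]
      exact mem_of_mem_nhds (hs i)
    have hb : e j r * e j r ∈ Set.image2 (fun x y : RN => x * y) U V :=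
      Set.mem_image2_of_mem hxU hyV
    have hmem := hmul _ hcV' _ hb
    simp only [Set.mem_setOf_eq, Pi.mul_apply] at hmem
    have hrr : r * r = 2 / c := Real.mul_self_sqrt (by positivity)
    have h2 : e j c j * (e j r j * e j r j) = 2 := by
      simp only [e, if_pos rfl, if_true]
      rw [hrr]
      field_simp
    rw [h2, abs_two] at hmem
    linarith
end

section
/- Let X = ℓ^∞ with sup-norm topology and pointwise product, Y = ℓ^∞ with the coordinate-wise (product) topology and pointwise product. The multiplication σ: X × Y → Y, σ(x,y) = xy, is n/2-bounded: there is a zero neighborhood U ⊆ X (e.g., the unit ball) such that σ(U,B) is bounded in Y for every bounded set B ⊆ Y. -/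
open scoped ENNReal

/-- Sets with coordinate-wise bounds are CoordBdd. -/
lemma coordBdd_of_bounds (B : Set Linf) (M : ℕ → ℝ) (hM : ∀ i, 0 ≤ M i)
    (hB : ∀ b ∈ B, ∀ i, |(b : ℕ → ℝ) i| ≤ M i) : CoordBdd B := by
  intro W hW
  obtain ⟨Wp, hWp, hWsub⟩ := hW
  rw [nhds_pi, Filter.mem_pi] at hWp
  obtain ⟨I, hIfin, t, ht, htsub⟩ := hWp
  obtain ⟨ε, hεpos, hεsub⟩ : ∃ ε : ℕ → ℝ, (∀ i, 0 < ε i) ∧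
      ∀ i ∈ I, Metric.ball (0 : ℝ) (ε i) ⊆ t i := by
    have : ∀ i, ∃ e : ℝ, 0 < e ∧ (i ∈ I → Metric.ball (0 : ℝ) e ⊆ t i) := by
      intro i
      by_cases hi : i ∈ I
      · obtain ⟨e, he, hsub⟩ := Metric.mem_nhds_iff.mp (ht i)
        exact ⟨e, he, fun _ => hsub⟩
      · exact ⟨1, one_pos, fun h => absurd h hi⟩
    choose e he1 he2 using this
    exact ⟨e, he1, fun i hi => he2 i hi⟩
  refine ⟨{y : Linf | ∀ i ∈ I, |(y : ℕ → ℝ) i| < ε i / (M i + 1)}, ?_, ?_⟩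
  · refine ⟨Set.pi I (fun i => Metric.ball (0 : ℝ) (ε i / (M i + 1))), ?_, ?_⟩
    · rw [nhds_pi, Filter.mem_pi]
      refine ⟨I, hIfin, fun i => Metric.ball 0 (ε i / (M i + 1)), fun i => ?_, subset_rfl⟩
      exact Metric.ball_mem_nhds 0 (div_pos (hεpos i) (by linarith [hM i]))
    · intro y hy i hi
      simpa [Real.dist_eq] using hy i hi
  · intro v hv b hb
    apply hWsub
    apply htsub
    intro i hi
    apply hεsub i hi
    rw [lp.infty_coeFn_mul]
    simp only [Metric.mem_ball, Pi.mul_apply, Real.dist_eq, sub_zero, abs_mul]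
    calc |(v : ℕ → ℝ) i| * |(b : ℕ → ℝ) i| ≤ (ε i / (M i + 1)) * M i := by
          exact mul_le_mul (le_of_lt (hv i hi)) (hB b hb i) (abs_nonneg _)
            (div_nonneg (hεpos i).le (by linarith [hM i]))
      _ < ε i := by
          rw [div_mul_eq_mul_div, div_lt_iff₀ (by linarith [hM i])]
          nlinarith [hεpos i, hM i]

/-- CoordBdd sets have coordinate-wise bounds. -/
lemma bounds_of_coordBdd (B : Set Linf) (hB : CoordBdd B) :
    ∀ i, ∃ M : ℝ, 0 ≤ M ∧ ∀ b ∈ B, |(b : ℕ → ℝ) i| ≤ M := by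
  intro i
  have hW : CoordNhd {y : Linf | |(y : ℕ → ℝ) i| < 1} := by
    refine ⟨{f : ℕ → ℝ | |f i| < 1}, ?_, fun y hy => hy⟩
    have hc : Continuous fun f : ℕ → ℝ => f i := continuous_apply i
    have : IsOpen {f : ℕ → ℝ | |f i| < 1} := by
      have : {f : ℕ → ℝ | |f i| < 1} = (fun f : ℕ → ℝ => f i) ⁻¹' {x | |x| < 1} := rfl
      rw [this]
      exact (isOpen_lt (continuous_abs) continuous_const).preimage hc
    exact this.mem_nhds (by simp)
  obtain ⟨V, hV, hVB⟩ := hB _ hW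
  obtain ⟨Vp, hVp, hVsub⟩ := hV
  -- constant sequences: c • 1 for small c lie in V
  have hcont : Filter.Tendsto (fun c : ℝ => (fun _ : ℕ => c)) (nhds 0) (nhds (0 : ℕ → ℝ)) := by
    have : Continuous fun c : ℝ => (fun _ : ℕ => c) := continuous_pi fun _ => continuous_id
    exact this.tendsto 0
  obtain ⟨δ, hδpos, hδ⟩ := Metric.mem_nhds_iff.mp (hcont hVp)
  set c : ℝ := δ / 2 with hc
  have hcpos : 0 < c := by positivity
  set x : Linf := c • (1 : Linf) with hx
  have hmem : x ∈ {y : Linf | (y : ℕ → ℝ) ∈ Vp} := by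
    have hcball : c ∈ Metric.ball (0 : ℝ) δ := by
      rw [Metric.mem_ball, Real.dist_eq, sub_zero, abs_of_pos hcpos, hc]; linarith
    have h1 : (fun _ : ℕ => c) ∈ Vp := hδ hcball
    have he : ((x : Linf) : ℕ → ℝ) = fun _ : ℕ => c := by
      ext j; simp [hx, lp.coeFn_smul, lp.infty_coeFn_one]
    show ((x : Linf) : ℕ → ℝ) ∈ Vp
    rw [he]; exact h1
  refine ⟨1 / c, by positivity, fun b hb => ?_⟩
  have := hVB _ (hVsub hmem) b hb
  simp only [Set.mem_setOf_eq, lp.infty_coeFn_mul] at this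
  have he : ((x : Linf) : ℕ → ℝ) i = c := by
    simp [hx, lp.coeFn_smul, lp.infty_coeFn_one]
  rw [Pi.mul_apply, he, abs_mul, abs_of_pos hcpos] at this
  rw [le_div_iff₀ hcpos]
  nlinarith [abs_nonneg ((b : ℕ → ℝ) i)]

/-- The multiplication σ : ℓ^∞(norm) × ℓ^∞(coord) → ℓ^∞(coord) is n/2-bounded: there is
a zero neighborhood U in the norm topology with σ(U,B) coordinate-wise bounded for
every coordinate-wise bounded B. -/
theorem stmt18 :
    ∃ U ∈ nhds (0 : Linf), ∀ B : Set Linf, CoordBdd B →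
      CoordBdd (Set.image2 (fun x y : Linf => x * y) U B) := by
  refine ⟨Metric.ball 0 1, Metric.ball_mem_nhds 0 one_pos, ?_⟩
  intro B hB
  have hM := bounds_of_coordBdd B hB
  choose M hM0 hMb using hM
  apply coordBdd_of_bounds _ M hM0
  rintro z ⟨u, hu, b, hb, rfl⟩ i
  rw [lp.infty_coeFn_mul, Pi.mul_apply, abs_mul]
  have h1 : |(u : ℕ → ℝ) i| ≤ 1 := by
    have := lp.norm_apply_le_norm ENNReal.top_ne_zero u i
    have hn : ‖u‖ < 1 := by rw [Metric.mem_ball, dist_zero_right] at hu; exact hu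
    calc |(u : ℕ → ℝ) i| = ‖(u : ℕ → ℝ) i‖ := rfl
      _ ≤ ‖u‖ := this
      _ ≤ 1 := hn.le
  calc |(u : ℕ → ℝ) i| * |(b : ℕ → ℝ) i| ≤ 1 * (M i) :=
        mul_le_mul h1 (hMb i b hb) (abs_nonneg _) zero_le_one
    _ = M i := one_mul _
end
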